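/- arXiv:1204.2306 — 3 statements merged into one kernel-verified Lean document; each statement's English description precedes it below -/
import Mathlib

section
/- Let S be a vine of a graph G. Then S is a subgraph of every minimum path covering of G; that is, in every path covering of G with P(G) paths, the edges of S all lie on paths of the covering. -/
namespace PaperPC

open SimpleGraph

variable {V : Type*}

/-- The degree of a vertex, via the cardinality of its neighbor set. -/
noncomputable def ndeg (G : SimpleGraph V) (v : V) : ℕ := (G.neighborSet v).ncard

/-- A linear forest: an acyclic graph of maximum degree at most 2,
i.e. a vertex-disjoint union of paths.  A spanning linear subforest of `G`
is exactly a path covering of `G` (isolated vertices are one-vertex paths). -/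
def IsLinearForest (H : SimpleGraph V) : Prop :=
  H.IsAcyclic ∧ ∀ v, ndeg H v ≤ 2

/-- The number of paths of a path covering = number of connected components. -/
noncomputable def numPaths (H : SimpleGraph V) : ℕ := Nat.card H.ConnectedComponent

/-- The path covering number `P(G)`. -/
noncomputable def pathCoverNumber (G : SimpleGraph V) : ℕ :=
  sInf {k | ∃ H ≤ G, IsLinearForest H ∧ numPaths H = k}

/-- `H` is a minimum path covering of `G`. -/
def IsMinPathCover (G H : SimpleGraph V) : Prop :=
  H ≤ G ∧ IsLinearForest H ∧ numPaths H = pathCoverNumber G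

open scoped Classical in
/-- The path sequence of a path covering: the multiset of the numbers of vertices
of its paths (a multiset encodes the nondecreasing ordered sequence). -/
noncomputable def pathSeq [Fintype V] (H : SimpleGraph V) : Multiset ℕ :=
  (Finset.univ : Finset H.ConnectedComponent).val.map fun c => c.supp.ncard

/-- `G` admits a unique path sequence. -/
def UniquePathSequence [Fintype V] (G : SimpleGraph V) : Prop :=
  ∀ H₁ H₂ : SimpleGraph V, IsMinPathCover G H₁ → IsMinPathCover G H₂ →
    pathSeq H₁ = pathSeq H₂

/-- Number of leaves (vertices of degree 1). -/
noncomputable def numLeaves (G : SimpleGraph V) : ℕ := {v | ndeg G v = 1}.ncard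

/-- Number of heavy edges (edges both of whose endpoints have degree > 2). -/
noncomputable def numHeavyEdges (G : SimpleGraph V) : ℕ :=
  {e ∈ G.edgeSet | ∀ v ∈ e, 2 < ndeg G v}.ncard

/-- Number of edges. -/
noncomputable def numEdges (G : SimpleGraph V) : ℕ := G.edgeSet.ncard

/-- A graph is 2-sparse if no two adjacent vertices both have degree > 2. -/
def TwoSparse (G : SimpleGraph V) : Prop :=
  ∀ u v, G.Adj u v → ndeg G u ≤ 2 ∨ ndeg G v ≤ 2

/-- `G` is a path graph. -/
def IsPathGraph (G : SimpleGraph V) : Prop := G.IsTree ∧ ∀ v, ndeg G v ≤ 2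

/-- `G` is a cycle graph. -/
def IsCycleGraph (G : SimpleGraph V) : Prop := G.Connected ∧ ∀ v, ndeg G v = 2

/-- A generalized star: a tree with exactly one heavy vertex (the center) in which
all vines have the same number of vertices (equivalently, all leaves are at the same
distance from the center). -/
def IsGenStar (G : SimpleGraph V) : Prop :=
  G.IsTree ∧ ∃ c k, 2 < ndeg G c ∧ (∀ v, v ≠ c → ndeg G v ≤ 2) ∧
    ∀ v, ndeg G v = 1 → G.dist c v = k

/-- An L(2,1)-labeling. -/
def IsL21Labeling (G : SimpleGraph V) (f : V → ℕ) : Prop :=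
  (∀ u v, G.Adj u v → 2 ≤ Nat.dist (f u) (f v)) ∧
  (∀ u v, G.dist u v = 2 → 1 ≤ Nat.dist (f u) (f v))

/-- `λ(G)`: the least `k` such that `G` has an L(2,1)-labeling with labels in `{0,…,k}`. -/
noncomputable def lambdaNum (G : SimpleGraph V) : ℕ :=
  sInf {k | ∃ f : V → ℕ, IsL21Labeling G f ∧ ∀ v, f v ≤ k}

/-- A λ-labeling: an L(2,1)-labeling with maximum label `λ(G)`. -/
def IsLambdaLabeling (G : SimpleGraph V) (f : V → ℕ) : Prop :=
  IsL21Labeling G f ∧ (∀ v, f v ≤ lambdaNum G) ∧ ∃ v, f v = lambdaNum G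

/-- The set of holes of a labeling: unused labels `h` with `1 ≤ h ≤ λ(G) - 1`. -/
def labHoles (G : SimpleGraph V) (f : V → ℕ) : Set ℕ :=
  {h | 1 ≤ h ∧ h + 1 ≤ lambdaNum G ∧ ∀ v, f v ≠ h}

/-- The hole index `ρ(G)`: minimum number of holes over all λ-labelings. -/
noncomputable def holeIndex (G : SimpleGraph V) : ℕ :=
  sInf {k | ∃ f : V → ℕ, IsLambdaLabeling G f ∧ (labHoles G f).ncard = k}

open scoped Classical in
/-- The island sequence of a labeling: the multiset of cardinalities of the maximal
intervals `[a,b]` of consecutive integers all used by the labeling. -/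
noncomputable def islandSeq [Fintype V] (G : SimpleGraph V) (f : V → ℕ) : Multiset ℕ :=
  (((Finset.range (lambdaNum G + 1)) ×ˢ (Finset.range (lambdaNum G + 1))).filter
    (fun q => q.1 ≤ q.2 ∧ (∀ x ∈ Finset.Icc q.1 q.2, ∃ v, f v = x) ∧
      (q.1 = 0 ∨ ∀ v, f v ≠ q.1 - 1) ∧ ∀ v, f v ≠ q.2 + 1)).val.map
    fun q => q.2 - q.1 + 1

/-- `G` admits (at least) two distinct island sequences. -/
def MultipleIslandSequences [Fintype V] (G : SimpleGraph V) : Prop :=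
  ∃ f g : V → ℕ, IsLambdaLabeling G f ∧ IsLambdaLabeling G g ∧
    (labHoles G f).ncard = holeIndex G ∧ (labHoles G g).ncard = holeIndex G ∧
    islandSeq G f ≠ islandSeq G g

/-- A vine: a maximal path one of whose endpoints (`a`) is a leaf and all of whose
vertices are light.  Maximality: any light vertex adjacent to the other end already
lies on the path. -/
def IsVine (G : SimpleGraph V) {a b : V} (p : G.Walk a b) : Prop :=
  p.IsPath ∧ ndeg G a = 1 ∧ (∀ v ∈ p.support, ndeg G v ≤ 2) ∧
  ∀ c, G.Adj b c → ndeg G c ≤ 2 → c ∈ p.support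

/-- A vine with center `v`: the (heavy) vertex adjacent to the non-leaf end of the vine. -/
def IsVineWithCenter (G : SimpleGraph V) {a b : V} (p : G.Walk a b) (v : V) : Prop :=
  IsVine G p ∧ G.Adj b v ∧ 2 < ndeg G v

/-- The matching number of the subgraph of `G` induced by `S`. -/
noncomputable def matchingNumberOn (G : SimpleGraph V) (S : Set V) : ℕ :=
  sSup {k | ∃ M : Set (Sym2 V), M ⊆ G.edgeSet ∧ (∀ e ∈ M, ∀ v ∈ e, v ∈ S) ∧
    (∀ e ∈ M, ∀ f ∈ M, e ≠ f → ∀ v, v ∈ e → v ∉ f) ∧ M.ncard = k}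

/-- Labels used in the family `F`: `A`, or `B k` where `k` records the number of
vertices of each vine of the labeled generalized star that produced the label. -/
inductive Lab | A | B (k : ℕ)

/-- A labeled generalized star with center `c` whose vines have `k` vertices each
(equivalently, every leaf is at distance `k` from `c`); the degenerate case
`deg c = 2` is the convention regarding a path of length `2k` as a labeled
generalized star with two vines.  The neighbors of the center are labeled `B k`,
the other non-leaf vertices (and the center) are labeled `A`, leaves are unlabeled. -/
def IsLGenStar {W : Type*} (H : SimpleGraph W) (c : W) (k : ℕ)
    (lab : W → Option Lab) : Prop :=
  H.IsTree ∧ 2 ≤ ndeg H c ∧ (∀ v, v ≠ c → ndeg H v ≤ 2) ∧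
  (∀ v, ndeg H v = 1 → H.dist c v = k) ∧
  lab c = some Lab.A ∧
  (∀ v, H.Adj c v → lab v = some (Lab.B k)) ∧
  (∀ v, v ≠ c → ¬H.Adj c v → ndeg H v = 1 → lab v = none) ∧
  (∀ v, v ≠ c → ¬H.Adj c v → 2 ≤ ndeg H v → lab v = some Lab.A)

/-- A labeled path: a path with at least three vertices, non-leaf vertices labeled `A`. -/
def IsLPath {W : Type*} (H : SimpleGraph W) (lab : W → Option Lab) : Prop :=
  H.IsTree ∧ (∀ v, ndeg H v ≤ 2) ∧ 3 ≤ Nat.card W ∧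
  (∀ v, ndeg H v = 1 → lab v = none) ∧
  ∀ v, 2 ≤ ndeg H v → lab v = some Lab.A

/-- The induced subgraph of `T` on `s` is a labeled generalized star. -/
def LGenStarOn (T : SimpleGraph V) (s : Set V) (c : V) (k : ℕ)
    (lab : V → Option Lab) : Prop :=
  ∃ hc : c ∈ s, IsLGenStar (T.induce s) ⟨c, hc⟩ k fun v => lab v.1

/-- The induced subgraph of `T` on `s` is a labeled path. -/
def LPathOn (T : SimpleGraph V) (s : Set V) (lab : V → Option Lab) : Prop :=
  IsLPath (T.induce s) fun v => lab v.1

/-- The family `F` of labeled trees, realized as induced subgraphs (on vertex sets `s`)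
of an ambient graph `T`:  start from a labeled generalized star with at least three
vines or from a labeled path, and repeatedly attach, via a single new edge, a labeled
generalized star with at least three vines at a vertex labeled `A` (Type-1), a labeled
path by one of its non-leaf vertices at a vertex labeled `A` (Type-2), or a labeled
generalized star whose vines have the same number of vertices `k` as those of the star
that labeled `u` with `B k`, at a vertex `u` labeled `B k` (Type-3). -/
inductive InF (T : SimpleGraph V) : Set V → (V → Option Lab) → Prop
  | base_star (s : Set V) (c : V) (k : ℕ) (lab : V → Option Lab) :
      LGenStarOn T s c k lab → 3 ≤ {w ∈ s | T.Adj c w}.ncard → InF T s lab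
  | base_path (s : Set V) (lab : V → Option Lab) :
      LPathOn T s lab → InF T s lab
  | type1 (s : Set V) (lab : V → Option Lab) (t : Set V) (lab' : V → Option Lab)
      (u c : V) (k : ℕ) :
      InF T s lab → Disjoint s t → u ∈ s → c ∈ t → lab u = some Lab.A →
      LGenStarOn T t c k lab' → 3 ≤ {w ∈ t | T.Adj c w}.ncard →
      (∀ x ∈ s, ∀ y ∈ t, (T.Adj x y ↔ x = u ∧ y = c)) →
      (∀ x ∈ s, lab' x = lab x) →
      InF T (s ∪ t) lab'
  | type2 (s : Set V) (lab : V → Option Lab) (t : Set V) (lab' : V → Option Lab)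
      (u v : V) :
      InF T s lab → Disjoint s t → u ∈ s → v ∈ t → lab u = some Lab.A →
      LPathOn T t lab' → 2 ≤ {w ∈ t | T.Adj v w}.ncard →
      (∀ x ∈ s, ∀ y ∈ t, (T.Adj x y ↔ x = u ∧ y = v)) →
      (∀ x ∈ s, lab' x = lab x) →
      InF T (s ∪ t) lab'
  | type3 (s : Set V) (lab : V → Option Lab) (t : Set V) (lab' : V → Option Lab)
      (u c : V) (k : ℕ) :
      InF T s lab → Disjoint s t → u ∈ s → c ∈ t → lab u = some (Lab.B k) →
      LGenStarOn T t c k lab' →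
      (∀ x ∈ s, ∀ y ∈ t, (T.Adj x y ↔ x = u ∧ y = c)) →
      (∀ x ∈ s, lab' x = lab x) →
      InF T (s ∪ t) lab'

/-- `G` is obtained from the tree `T` by expanding each edge of `T` into a complete
graph of arbitrary order: there is an embedding `ι` of the vertices of `T` and an
assignment `b` of a block of vertices of `G` to each edge of `T` such that an original
vertex lies in the block of an edge iff it is an endpoint of that edge, blocks of
distinct edges meet only in original vertices, every vertex of `G` lies in some block,
and two distinct vertices of `G` are adjacent iff they lie in a common block. -/
def IsBlockExpansion {U W : Type*} (T : SimpleGraph U) (G : SimpleGraph W) : Prop :=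
  ∃ (ι : U ↪ W) (b : Sym2 U → Set W),
    (∀ (u : U), ∀ e ∈ T.edgeSet, (ι u ∈ b e ↔ u ∈ e)) ∧
    (∀ e ∈ T.edgeSet, ∀ f ∈ T.edgeSet, e ≠ f → b e ∩ b f ⊆ Set.range ι) ∧
    (∀ w : W, ∃ e ∈ T.edgeSet, w ∈ b e) ∧
    (∀ x y : W, G.Adj x y ↔ x ≠ y ∧ ∃ e ∈ T.edgeSet, x ∈ b e ∧ y ∈ b e)

private lemma mem_pair_of_ncard_le_two {V : Type*} [Fintype V] {s : Set V} {a b c : V}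
    (ha : a ∈ s) (hb : b ∈ s) (hab : a ≠ b) (h2 : s.ncard ≤ 2) (hc : c ∈ s) :
    c = a ∨ c = b := by
  by_contra hcon
  push_neg at hcon
  have hsub : ({c, a, b} : Set V) ⊆ s := by
    intro z hz
    rcases hz with rfl | rfl | rfl <;> assumption
  have h3 : ({c, a, b} : Set V).ncard = 3 := by
    rw [Set.ncard_insert_of_notMem (by simp [hcon.1, hcon.2]),
      Set.ncard_insert_of_notMem (by simp [hab]), Set.ncard_singleton]
  have := Set.ncard_le_ncard hsub (Set.toFinite s)
  omega

private lemma core2 {V : Type*} [Fintype V] (G : SimpleGraph V) :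
    ∀ {u x : V} (r : G.Walk u x), r.IsPath →
      (∀ v ∈ r.support, ndeg G v ≤ 2) →
      ∀ (t : V), (∀ w, G.Adj u w → w ∈ r.support ∨ w = t) →
      ∀ v ∈ r.support, v ≠ x → ∀ w, G.Adj v w → w ∈ r.support ∨ w = t := by
  intro u x r
  induction r with
  | nil =>
    intro _ _ t _ v hv hvx w _
    simp only [SimpleGraph.Walk.support_nil, List.mem_singleton] at hv
    exact absurd hv hvx
  | @cons u u₁ x h r₁ ih =>
    intro hp hdeg t hhead v hv hvx w hvw
    rw [SimpleGraph.Walk.support_cons, List.mem_cons] at hv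
    rcases hv with rfl | hv
    · exact hhead w hvw
    · cases r₁ with
      | nil =>
        simp only [SimpleGraph.Walk.support_nil, List.mem_singleton] at hv
        exact absurd hv hvx
      | @cons _ u₂ _ h₁ r₂ =>
        have hu_not : u ∉ (SimpleGraph.Walk.cons h₁ r₂).support := by
          have hnd := hp.support_nodup
          rw [SimpleGraph.Walk.support_cons] at hnd
          exact (List.nodup_cons.mp hnd).1
        have hu2mem : u₂ ∈ (SimpleGraph.Walk.cons h₁ r₂).support := by
          rw [SimpleGraph.Walk.support_cons]
          exact List.mem_cons_of_mem _ r₂.start_mem_support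
        have hne : u ≠ u₂ := fun hh => hu_not (hh ▸ hu2mem)
        have hdeg₁ : (G.neighborSet u₁).ncard ≤ 2 :=
          hdeg u₁ (by rw [SimpleGraph.Walk.support_cons]
                      exact List.mem_cons_of_mem _ (SimpleGraph.Walk.start_mem_support _))
        have hhead' : ∀ w', G.Adj u₁ w' → w' ∈ (SimpleGraph.Walk.cons h₁ r₂).support ∨ w' = u := by
          intro w' hw'
          have h2 := mem_pair_of_ncard_le_two (a := u) (b := u₂)
            (show u ∈ G.neighborSet u₁ from h.symm)
            (show u₂ ∈ G.neighborSet u₁ from h₁) hne hdeg₁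
            (show w' ∈ G.neighborSet u₁ from hw')
          rcases h2 with rfl | rfl
          · exact Or.inr rfl
          · exact Or.inl hu2mem
        have h3 := ih hp.of_cons
          (fun z hz => hdeg z (by rw [SimpleGraph.Walk.support_cons]
                                  exact List.mem_cons_of_mem _ hz))
          u hhead' v hv hvx w hvw
        rcases h3 with h3 | rfl
        · exact Or.inl (by rw [SimpleGraph.Walk.support_cons]
                           exact List.mem_cons_of_mem _ h3)
        · exact Or.inl (by rw [SimpleGraph.Walk.support_cons]
                           exact List.mem_cons_self)

private lemma main_aux {V : Type*} [Fintype V] (G : SimpleGraph V) (H : SimpleGraph V)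
    (hH : IsMinPathCover G H) {a b : V} (ha : ndeg G a = 1) :
    ∀ {x : V} (r : G.Walk a x) (q : G.Walk x b),
      (r.append q).IsPath → (∀ v ∈ (r.append q).support, ndeg G v ≤ 2) →
      ∀ e ∈ q.edges, e ∈ H.edgeSet := by
  intro x r q
  induction q with
  | nil => simp
  | @cons x y b hxy q' ih =>
    intro hp hdeg e he
    rw [SimpleGraph.Walk.edges_cons, List.mem_cons] at he
    have huniq : ∀ z w : V, z ∈ G.neighborSet a → w ∈ G.neighborSet a → w = z := by
      intro z w hz hw
      obtain ⟨c, hc⟩ := Set.ncard_eq_one.mp ha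
      rw [hc, Set.mem_singleton_iff] at hz hw
      rw [hz, hw]
    have heqapp : (r.concat hxy).append q' = r.append (SimpleGraph.Walk.cons hxy q') :=
      SimpleGraph.Walk.concat_append r hxy q'
    have hkey : s(x, y) ∈ H.edgeSet := by
      by_contra he'
      have hp' : ((r.concat hxy).append q').IsPath := by rw [heqapp]; exact hp
      have hr'path : (r.concat hxy).IsPath := hp'.of_append_left
      have hrpath : r.IsPath := hp.of_append_left
      have hxs : x ∈ r.support := r.end_mem_support
      have has : a ∈ r.support := r.start_mem_support
      have hynotr : y ∉ r.support := by
        intro hy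
        have hnd := hp.support_nodup
        rw [SimpleGraph.Walk.support_append] at hnd
        have hdisj := List.disjoint_of_nodup_append hnd
        refine hdisj hy ?_
        rw [SimpleGraph.Walk.support_cons, List.tail_cons]
        exact q'.start_mem_support
      have hya : y ≠ a := fun hh => hynotr (hh ▸ has)
      have hdegr : ∀ v ∈ r.support, ndeg G v ≤ 2 := fun v hv =>
        hdeg v ((SimpleGraph.Walk.mem_support_append_iff _ _).mpr (Or.inl hv))
      have hdegr' : ∀ v ∈ (r.concat hxy).support, ndeg G v ≤ 2 := fun v hv =>
        hdeg v (by rw [← heqapp]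
                   exact SimpleGraph.Walk.subset_support_append_left _ _ hv)
      have hmemr' : ∀ v ∈ r.support, v ∈ (r.concat hxy).support := by
        intro v hv
        rw [SimpleGraph.Walk.support_concat, List.mem_append]
        exact Or.inl hv
      have hhead' : ∀ w, G.Adj a w → w ∈ (r.concat hxy).support ∨ w = a := by
        cases r with
        | nil =>
          intro w hw
          have : w = y := huniq y w hxy hw
          subst this
          refine Or.inl ?_
          rw [SimpleGraph.Walk.support_concat, List.mem_append]
          exact Or.inr (List.mem_singleton_self _)
        | @cons _ a₁ _ h₀ r₀ =>
          intro w hw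
          have : w = a₁ := huniq a₁ w h₀ hw
          subst this
          refine Or.inl (hmemr' _ ?_)
          rw [SimpleGraph.Walk.support_cons]
          exact List.mem_cons_of_mem _ r₀.start_mem_support
      have hclosure : ∀ v ∈ r.support, ∀ w, H.Adj v w → w ∈ r.support := by
        intro v hv w hvw
        have hGvw : G.Adj v w := hH.1 hvw
        have hvy : v ≠ y := fun hh => hynotr (hh ▸ hv)
        have h1 := core2 G (r.concat hxy) hr'path hdegr' a hhead' v (hmemr' v hv) hvy w hGvw
        have hwy_or : w ∈ r.support ∨ w = y := by
          rcases h1 with h1 | rfl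
          · rw [SimpleGraph.Walk.support_concat,
              List.mem_append, List.mem_singleton] at h1
            exact h1
          · exact Or.inl has
        rcases hwy_or with hw | rfl
        · exact hw
        · by_cases hvx : v = x
          · subst hvx
            exact absurd (H.mem_edgeSet.mpr hvw) he'
          · cases r with
            | nil =>
              simp only [SimpleGraph.Walk.support_nil, List.mem_singleton] at hv
              exact absurd hv hvx
            | @cons _ a₁ _ h₀ r₀ =>
              have hhead : ∀ w, G.Adj a w →
                  w ∈ (SimpleGraph.Walk.cons h₀ r₀).support ∨ w = a := by
                intro w hw
                have : w = a₁ := huniq a₁ w h₀ hw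
                subst this
                refine Or.inl ?_
                rw [SimpleGraph.Walk.support_cons]
                exact List.mem_cons_of_mem _ r₀.start_mem_support
              have h2 := core2 G (SimpleGraph.Walk.cons h₀ r₀) hrpath hdegr a hhead
                v hv hvx _ hGvw
              rcases h2 with h2 | h2
              · exact absurd h2 hynotr
              · exact absurd h2 hya
      have hreach : ¬ H.Reachable x y := by
        intro hr
        obtain ⟨wk⟩ := hr
        have hstay : ∀ {c d : V} (wk : H.Walk c d), c ∈ r.support → d ∈ r.support := by
          intro c d wk
          induction wk with
          | nil => exact id
          | cons hcd wk' ih' => exact fun hc => ih' (hclosure _ hc _ hcd)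
        exact hynotr (hstay wk hxs)
      -- build the augmented graph
      have hxyne : x ≠ y := hxy.ne
      have hEle : SimpleGraph.fromEdgeSet {s(x, y)} ≤ G := by
        intro v w hvw
        rw [SimpleGraph.fromEdgeSet_adj, Set.mem_singleton_iff, Sym2.eq_iff] at hvw
        rcases hvw.1 with ⟨rfl, rfl⟩ | ⟨rfl, rfl⟩
        · exact hxy
        · exact hxy.symm
      have hH'le : H ⊔ SimpleGraph.fromEdgeSet {s(x, y)} ≤ G := sup_le hH.1 hEle
      have hH'adjxy : (H ⊔ SimpleGraph.fromEdgeSet {s(x, y)}).Adj x y := by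
        rw [SimpleGraph.sup_adj, SimpleGraph.fromEdgeSet_adj]
        exact Or.inr ⟨rfl, hxyne⟩
      have hdel : (H ⊔ SimpleGraph.fromEdgeSet {s(x, y)}) \ SimpleGraph.fromEdgeSet {s(x, y)} = H := by
        ext v w
        rw [SimpleGraph.sdiff_adj, SimpleGraph.sup_adj]
        constructor
        · rintro ⟨h1 | h1, h2⟩
          · exact h1
          · exact absurd h1 h2
        · intro h1
          refine ⟨Or.inl h1, ?_⟩
          rw [SimpleGraph.fromEdgeSet_adj, Set.mem_singleton_iff]
          rintro ⟨heq, -⟩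
          exact he' (heq ▸ (H.mem_edgeSet.mpr h1))
      have hbridge : (H ⊔ SimpleGraph.fromEdgeSet {s(x, y)}).IsBridge s(x, y) := by
        rw [SimpleGraph.isBridge_iff, SimpleGraph.deleteEdges, hdel]
        exact hreach
      have hacyc : (H ⊔ SimpleGraph.fromEdgeSet {s(x, y)}).IsAcyclic := by
        intro v c hc
        have hnotmem : s(x, y) ∉ c.edges :=
          hbridge.notMem_edges_of_isCycle hc
        have hcH : ∀ e ∈ c.edges, e ∈ H.edgeSet := by
          intro e hee
          have hmem := c.edges_subset_edgeSet hee
          rw [SimpleGraph.edgeSet_sup, Set.mem_union] at hmem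
          rcases hmem with hmem | hmem
          · exact hmem
          · rw [SimpleGraph.edgeSet_fromEdgeSet, Set.mem_diff, Set.mem_singleton_iff] at hmem
            exact absurd (hmem.1 ▸ hee) hnotmem
        exact hH.2.1.1 _ (hc.transfer hcH)
      have hdeg' : ∀ v, ndeg (H ⊔ SimpleGraph.fromEdgeSet {s(x, y)}) v ≤ 2 := by
        intro v
        by_cases hvmem : v = x ∨ v = y
        · have hvG : ndeg G v ≤ 2 := by
            rcases hvmem with rfl | rfl
            · exact hdeg v ((SimpleGraph.Walk.mem_support_append_iff _ _).mpr
                (Or.inr (SimpleGraph.Walk.start_mem_support _)))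
            · refine hdeg v ((SimpleGraph.Walk.mem_support_append_iff _ _).mpr (Or.inr ?_))
              rw [SimpleGraph.Walk.support_cons]
              exact List.mem_cons_of_mem _ q'.start_mem_support
          refine le_trans (Set.ncard_le_ncard ?_ (Set.toFinite _)) hvG
          intro w hw
          exact hH'le hw
        · push_neg at hvmem
          have hns : (H ⊔ SimpleGraph.fromEdgeSet {s(x, y)}).neighborSet v =
              H.neighborSet v := by
            ext w
            simp only [SimpleGraph.mem_neighborSet, SimpleGraph.sup_adj,
              SimpleGraph.fromEdgeSet_adj, Set.mem_singleton_iff]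
            constructor
            · rintro (h1 | ⟨heq, hne⟩)
              · exact h1
              · rw [Sym2.eq_iff] at heq
                rcases heq with ⟨rfl, -⟩ | ⟨rfl, -⟩
                · exact absurd rfl hvmem.1
                · exact absurd rfl hvmem.2
            · exact Or.inl
          show ((H ⊔ SimpleGraph.fromEdgeSet {s(x, y)}).neighborSet v).ncard ≤ 2
          rw [hns]
          exact hH.2.1.2 v
      -- component count decreases
      haveI : Fintype H.ConnectedComponent := Fintype.ofFinite _
      haveI : Fintype (H ⊔ SimpleGraph.fromEdgeSet {s(x, y)}).ConnectedComponent :=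
        Fintype.ofFinite _
      set f : H.ConnectedComponent →
          (H ⊔ SimpleGraph.fromEdgeSet {s(x, y)}).ConnectedComponent :=
        SimpleGraph.ConnectedComponent.map
          (SimpleGraph.Hom.ofLE le_sup_left) with hf
      have hfsurj : Function.Surjective f := by
        intro c
        refine SimpleGraph.ConnectedComponent.ind (fun v => ?_) c
        exact ⟨H.connectedComponentMk v, rfl⟩
      have hfninj : ¬ Function.Injective f := by
        intro hinj
        have h1 : f (H.connectedComponentMk x) = f (H.connectedComponentMk y) := by
          rw [hf]
          exact SimpleGraph.ConnectedComponent.sound hH'adjxy.reachable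
        have h2 := hinj h1
        rw [SimpleGraph.ConnectedComponent.eq] at h2
        exact hreach h2
      have hcard : Nat.card (H ⊔ SimpleGraph.fromEdgeSet {s(x, y)}).ConnectedComponent <
          Nat.card H.ConnectedComponent := by
        rw [Nat.card_eq_fintype_card, Nat.card_eq_fintype_card]
        exact Fintype.card_lt_of_surjective_not_injective f hfsurj hfninj
      have hle2 : pathCoverNumber G ≤ numPaths (H ⊔ SimpleGraph.fromEdgeSet {s(x, y)}) :=
        Nat.sInf_le ⟨_, hH'le, ⟨hacyc, hdeg'⟩, rfl⟩
      have heq2 : numPaths H = pathCoverNumber G := hH.2.2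
      simp only [numPaths] at hle2 heq2
      omega
    rcases he with rfl | he
    · exact hkey
    · exact ih (r.concat hxy) (by rw [heqapp]; exact hp) (by rw [heqapp]; exact hdeg) e he

/-- **Lemma (Statement 9).** Let `S` (here the path `p`) be a vine of a graph `G`.
Then `S` is a subgraph of every minimum path covering of `G`: all its edges lie on
paths of the covering. -/
theorem vine_subgraph_of_minPathCover {V : Type*} [Fintype V] (G : SimpleGraph V)
    {a b : V} (p : G.Walk a b) (hp : IsVine G p)
    (H : SimpleGraph V) (hH : IsMinPathCover G H) :
    ∀ e ∈ p.edges, e ∈ H.edgeSet := by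
  intro e he
  refine main_aux G H hH hp.2.1 SimpleGraph.Walk.nil p ?_ ?_ e he
  · rw [SimpleGraph.Walk.nil_append]; exact hp.1
  · rw [SimpleGraph.Walk.nil_append]; exact hp.2.2.1

end PaperPC
end

section
/- If a vertex v is the common center of two vines S₁ and S₂ in a graph G, then v is an internal vertex (not an endpoint) of the path containing it in every minimum path covering of G. -/
namespace PaperPC

open SimpleGraph

variable {V : Type*}

section Aux

variable [Fintype V] {G : SimpleGraph V}

private lemma two_le_ndeg_of_mem {x y z : V} (hy : G.Adj x y) (hz : G.Adj x z) (hyz : y ≠ z) :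
    2 ≤ ndeg G x := by
  have hsub : ({y, z} : Set V) ⊆ G.neighborSet x := by
    intro w hw
    rcases hw with rfl | hw
    · exact hy
    · rcases hw with rfl; exact hz
  calc 2 = ({y, z} : Set V).ncard := (Set.ncard_pair hyz).symm
    _ ≤ ndeg G x := Set.ncard_le_ncard hsub (Set.toFinite _)

private lemma three_le_ndeg_of_mem {x y z w : V} (hy : G.Adj x y) (hz : G.Adj x z)
    (hw : G.Adj x w) (hyz : y ≠ z) (hyw : y ≠ w) (hzw : z ≠ w) : 3 ≤ ndeg G x := by
  have hsub : ({y, z, w} : Set V) ⊆ G.neighborSet x := by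
    intro u hu
    rcases hu with rfl | rfl | rfl
    · exact hy
    · exact hz
    · exact hw
  have hcard : ({y, z, w} : Set V).ncard = 3 := by
    rw [Set.ncard_insert_of_notMem (by simp [hyz, hyw]) (Set.toFinite _), Set.ncard_pair hzw]
  calc 3 = ({y, z, w} : Set V).ncard := hcard.symm
    _ ≤ ndeg G x := Set.ncard_le_ncard hsub (Set.toFinite _)

/-- Two paths starting at `b` (which has the extra neighbor `v` off both paths), all of
whose vertices are light, ending at leaves, must end at the same leaf. -/
private lemma vine_end_unique {b a₁ : V} (q₁ : G.Walk b a₁) :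
    ∀ {a₂ v : V} (q₂ : G.Walk b a₂),
      G.Adj b v → q₁.IsPath → q₂.IsPath → v ∉ q₁.support → v ∉ q₂.support →
      (∀ x ∈ q₁.support, ndeg G x ≤ 2) → (∀ x ∈ q₂.support, ndeg G x ≤ 2) →
      ndeg G a₁ = 1 → ndeg G a₂ = 1 → a₁ = a₂ := by
  induction q₁ with
  | nil =>
    intro a₂ v q₂ hbv hp1 hp2 hv1 hv2 hd1 hd2 h1 h2
    cases q₂ with
    | nil => rfl
    | @cons _ c _ h' r' =>
      exfalso
      have hc : c ∈ (Walk.cons h' r').support := by simp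
      have hvc : v ≠ c := fun h => hv2 (h ▸ hc)
      have := two_le_ndeg_of_mem hbv h' hvc
      omega
  | @cons b c a₁ h r ih =>
    intro a₂ v q₂ hbv hp1 hp2 hv1 hv2 hd1 hd2 h1 h2
    have hcmem : c ∈ (Walk.cons h r).support := by simp
    have hvc : v ≠ c := fun hh => hv1 (hh ▸ hcmem)
    cases q₂ with
    | nil =>
      exfalso
      have := two_le_ndeg_of_mem hbv h hvc
      omega
    | @cons _ c' _ h' r' =>
      have hc'mem : c' ∈ (Walk.cons h' r').support := by simp
      have hvc' : v ≠ c' := fun hh => hv2 (hh ▸ hc'mem)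
      have hcc' : c = c' := by
        by_contra hweird
        have := three_le_ndeg_of_mem hbv h h' hvc hvc' hweird
        have := hd1 b (Walk.start_mem_support _)
        omega
      subst hcc'
      rw [Walk.cons_isPath_iff] at hp1 hp2
      exact ih r' h.symm hp1.1 hp2.1 hp1.2 hp2.2
        (fun x hx => hd1 x (by simp [hx]))
        (fun x hx => hd2 x (by simp [hx])) h1 h2

/-- Closure lemma: for a vine walk `q` from `b` to the leaf `a`, with `v` the center
adjacent to `b`, every `G`-neighbor of a vertex of `q` is on `q`, except `v` from `b`. -/
private lemma vine_closed {b a : V} (q : G.Walk b a) :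
    ∀ {v : V}, G.Adj b v → q.IsPath → v ∉ q.support →
      (∀ x ∈ q.support, ndeg G x ≤ 2) → ndeg G a = 1 →
      ∀ x ∈ q.support, ∀ y, G.Adj x y → y ∈ q.support ∨ (x = b ∧ y = v) := by
  induction q with
  | nil =>
    intro v hbv hp hv hd ha x hx y hxy
    rw [Walk.support_nil, List.mem_singleton] at hx
    subst hx
    right
    refine ⟨rfl, ?_⟩
    obtain ⟨z, hz⟩ := Set.ncard_eq_one.mp ha
    have h1 : y ∈ G.neighborSet x := hxy
    have h2 : v ∈ G.neighborSet x := hbv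
    rw [hz] at h1 h2
    rw [Set.mem_singleton_iff] at h1 h2
    rw [h1, h2]
  | @cons b c a h r ih =>
    intro v hbv hp hv hd ha x hx y hxy
    rw [Walk.support_cons, List.mem_cons] at hx
    have hcmem : c ∈ (Walk.cons h r).support := by simp
    have hvc : v ≠ c := fun hh => hv (hh ▸ hcmem)
    rw [Walk.cons_isPath_iff] at hp
    rcases hx with rfl | hx
    · -- x = b : its only neighbors are v and c
      have hdb : ndeg G x ≤ 2 := hd x (Walk.start_mem_support _)
      have hpair : G.neighborSet x = {v, c} := by
        refine (Set.eq_of_subset_of_ncard_le ?_ ?_ (Set.toFinite _)).symm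
        · intro w hw
          rcases hw with rfl | hw
          · exact hbv
          · rcases hw with rfl; exact h
        · rw [Set.ncard_pair hvc]; exact hdb
      have hy : y ∈ ({v, c} : Set V) := hpair ▸ (hxy : y ∈ G.neighborSet x)
      rcases hy with rfl | hy
      · exact Or.inr ⟨rfl, rfl⟩
      · rcases hy with rfl; exact Or.inl hcmem
    · have := ih (v := b) h.symm hp.1 hp.2
        (fun z hz => hd z (by simp [hz])) ha x hx y hxy
      rcases this with hmem | ⟨rfl, rfl⟩
      · left; rw [Walk.support_cons]; exact List.mem_cons_of_mem _ hmem
      · left; exact Walk.start_mem_support _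

/-- Key lemma: if `q` is (the reverse of) a vine with center `v`, `H` a minimum path
covering with `ndeg H v ≤ 1` missing the edge `b–v`, we get a contradiction. -/
private lemma key {b a v : V} (q : G.Walk b a)
    (hqp : q.IsPath) (ha : ndeg G a = 1) (hlight : ∀ x ∈ q.support, ndeg G x ≤ 2)
    (hbv : G.Adj b v) (hv : 2 < ndeg G v)
    {H : SimpleGraph V} (hH : IsMinPathCover G H)
    (hdeg : ndeg H v ≤ 1) (hnadj : ¬ H.Adj b v) : False := by
  classical
  obtain ⟨hle, ⟨hac, hmax⟩, hnum⟩ := hH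
  have hvs : v ∉ q.support := fun hmem => by have := hlight v hmem; omega
  have hvb : v ≠ b := fun h => hvs (h ▸ Walk.start_mem_support q)
  have hclose := vine_closed q hbv hqp hvs hlight ha
  -- H-edges from the vine stay in the vine
  have hHclose : ∀ x ∈ q.support, ∀ y, H.Adj x y → y ∈ q.support := by
    intro x hx y hxy
    rcases hclose x hx y (hle hxy) with hmem | ⟨rfl, rfl⟩
    · exact hmem
    · exact absurd hxy hnadj
  have aux : ∀ {s t : V} (w : H.Walk s t), s ∈ q.support → t ∈ q.support := by
    intro s t w
    induction w with
    | nil => exact id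
    | cons hadj w ih => intro hs; exact ih (hHclose _ hs _ hadj)
  have hnr : ¬ H.Reachable v b := by
    intro hr
    obtain ⟨w⟩ := hr.symm
    exact hvs (aux w (Walk.start_mem_support q))
  -- build a better path covering
  set H' := H ⊔ SimpleGraph.edge v b with hH'def
  have hE : (SimpleGraph.edge v b : SimpleGraph V) ≤ G := by
    intro x y hxy
    rw [SimpleGraph.edge_adj] at hxy
    rcases hxy.1 with ⟨rfl, rfl⟩ | ⟨rfl, rfl⟩
    · exact hbv.symm
    · exact hbv
  have hH'le : H' ≤ G := sup_le hle hE
  have hH'adj : H'.Adj v b := by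
    rw [hH'def, sup_adj, SimpleGraph.edge_adj]
    exact Or.inr ⟨Or.inl ⟨rfl, rfl⟩, hvb⟩
  -- degrees
  have hnbr : ∀ x, H'.neighborSet x ⊆ H.neighborSet x ∪ (SimpleGraph.edge v b).neighborSet x := by
    intro x y hy
    rcases (sup_adj _ _ _ _).mp hy with h1 | h2
    · exact Or.inl h1
    · exact Or.inr h2
  have hedgeNbr : ∀ x y, (SimpleGraph.edge v b).Adj x y → (x = v ∧ y = b) ∨ (x = b ∧ y = v) := by
    intro x y hxy
    rw [SimpleGraph.edge_adj] at hxy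
    exact hxy.1
  have hdegb : ndeg H b ≤ 1 := by
    have hsub : H.neighborSet b ⊆ G.neighborSet b \ {v} := by
      intro y hy
      refine ⟨hle hy, ?_⟩
      intro hyv
      rw [Set.mem_singleton_iff] at hyv
      exact hnadj (hyv ▸ hy)
    have h1 : (G.neighborSet b \ {v}).ncard + 1 = ndeg G b :=
      Set.ncard_diff_singleton_add_one (by exact hbv) (Set.toFinite _)
    have h2 : ndeg G b ≤ 2 := hlight b (Walk.start_mem_support q)
    have h3 := Set.ncard_le_ncard hsub (Set.toFinite _)
    unfold ndeg
    omega
  have hmax' : ∀ x, ndeg H' x ≤ 2 := by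
    intro x
    by_cases hxv : x = v
    · subst hxv
      have hsub : H'.neighborSet x ⊆ insert b (H.neighborSet x) := by
        intro y hy
        rcases hnbr x hy with h1 | h2
        · exact Set.mem_insert_of_mem _ h1
        · rcases hedgeNbr _ _ h2 with ⟨_, rfl⟩ | ⟨hxb, _⟩
          · exact Set.mem_insert _ _
          · exact absurd hxb hvb
      calc ndeg H' x ≤ (insert b (H.neighborSet x)).ncard :=
            Set.ncard_le_ncard hsub (Set.toFinite _)
        _ ≤ ndeg H x + 1 := Set.ncard_insert_le _ _
        _ ≤ 2 := by omega
    · by_cases hxb : x = b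
      · subst hxb
        have hsub : H'.neighborSet x ⊆ insert v (H.neighborSet x) := by
          intro y hy
          rcases hnbr x hy with h1 | h2
          · exact Set.mem_insert_of_mem _ h1
          · rcases hedgeNbr _ _ h2 with ⟨hxv', _⟩ | ⟨_, rfl⟩
            · exact absurd hxv'.symm hvb
            · exact Set.mem_insert _ _
        calc ndeg H' x ≤ (insert v (H.neighborSet x)).ncard :=
              Set.ncard_le_ncard hsub (Set.toFinite _)
          _ ≤ ndeg H x + 1 := Set.ncard_insert_le _ _
          _ ≤ 2 := by omega
      · have hsub : H'.neighborSet x ⊆ H.neighborSet x := by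
          intro y hy
          rcases hnbr x hy with h1 | h2
          · exact h1
          · rcases hedgeNbr _ _ h2 with ⟨hxv', _⟩ | ⟨hxb', _⟩
            · exact absurd hxv' hxv
            · exact absurd hxb' hxb
        exact le_trans (Set.ncard_le_ncard hsub (Set.toFinite _)) (hmax x)
  -- acyclicity
  have hH'ac : H'.IsAcyclic := by
    intro u c hc
    by_cases he : s(v, b) ∈ c.edges
    · have hreach := ((adj_and_reachable_delete_edges_iff_exists_cycle (G := H')).mpr
        ⟨u, c, hc, he⟩).2
      refine hnr (hreach.mono ?_)
      intro x y hxy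
      rw [deleteEdges, sdiff_adj] at hxy
      obtain ⟨hxy1, hxy2⟩ := hxy
      rcases (sup_adj _ _ _ _).mp hxy1 with h1 | h2
      · exact h1
      · exfalso
        apply hxy2
        rw [fromEdgeSet_adj]
        rcases hedgeNbr _ _ h2 with ⟨rfl, rfl⟩ | ⟨rfl, rfl⟩
        · exact ⟨rfl, h2.ne⟩
        · exact ⟨Sym2.eq_swap, h2.ne⟩
    · have hsub : ∀ e ∈ c.edges, e ∈ H.edgeSet := by
        intro e hee
        have hmem := c.edges_subset_edgeSet hee
        rw [hH'def, edgeSet_sup, SimpleGraph.edge_edgeSet_of_ne hvb] at hmem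
        rcases hmem with h1 | h2
        · exact h1
        · rw [Set.mem_singleton_iff] at h2
          exact absurd (h2 ▸ hee) he
      exact hac (c.transfer H hsub) (hc.transfer hsub)
  -- fewer components
  have hlt : numPaths H' < numPaths H := by
    letI : Fintype H.ConnectedComponent := Fintype.ofFinite _
    letI : Fintype H'.ConnectedComponent := Fintype.ofFinite _
    have hmono : H ≤ H' := le_sup_left
    set f : H.ConnectedComponent → H'.ConnectedComponent :=
      ConnectedComponent.map (Hom.ofLE hmono) with hf
    have hsurj : Function.Surjective f := by
      refine ConnectedComponent.ind (fun w => ⟨H.connectedComponentMk w, ?_⟩)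
      rfl
    have hninj : ¬ Function.Injective f := by
      intro hinj
      have heq : f (H.connectedComponentMk v) = f (H.connectedComponentMk b) := by
        simp only [hf, ConnectedComponent.map_mk]
        exact ConnectedComponent.eq.mpr hH'adj.reachable
      exact hnr (ConnectedComponent.eq.mp (hinj heq))
    have := Fintype.card_lt_of_surjective_not_injective f hsurj hninj
    unfold numPaths
    rw [Nat.card_eq_fintype_card, Nat.card_eq_fintype_card]
    exact this
  -- contradiction with minimality
  have hmem : numPaths H' ∈ {k | ∃ H₀ ≤ G, IsLinearForest H₀ ∧ numPaths H₀ = k} :=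
    ⟨H', hH'le, ⟨hH'ac, hmax'⟩, rfl⟩
  have hsinf := Nat.sInf_le hmem
  rw [hnum] at hlt
  have hfin : pathCoverNumber G ≤ numPaths H' := Nat.sInf_le hmem
  omega

end Aux

/-- **Lemma (Statement 10).** If `v` is the common center of two (distinct) vines
`p₁, p₂` of a graph `G`, then in every minimum path covering of `G` the vertex `v` is
an internal vertex of the path containing it (i.e. it has degree 2 in the covering). -/
theorem center_of_two_vines_internal {V : Type*} [Fintype V] (G : SimpleGraph V)
    {a₁ b₁ a₂ b₂ v : V} (p₁ : G.Walk a₁ b₁) (p₂ : G.Walk a₂ b₂)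
    (h₁ : IsVineWithCenter G p₁ v) (h₂ : IsVineWithCenter G p₂ v) (hne : a₁ ≠ a₂)
    (H : SimpleGraph V) (hH : IsMinPathCover G H) :
    ndeg H v = 2 := by
  classical
  obtain ⟨⟨hp1, ha1, hl1, -⟩, hb1v, hv⟩ := h₁
  obtain ⟨⟨hp2, ha2, hl2, -⟩, hb2v, -⟩ := h₂
  have hvs1 : v ∉ p₁.support := fun hmem => by have := hl1 v hmem; omega
  have hvs2 : v ∉ p₂.support := fun hmem => by have := hl2 v hmem; omega
  have hub : ndeg H v ≤ 2 := hH.2.1.2 v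
  by_contra hcon
  have hdeg : ndeg H v ≤ 1 := by omega
  have hbne : b₁ ≠ b₂ := by
    intro hbb
    subst hbb
    apply hne
    exact vine_end_unique p₁.reverse p₂.reverse hb1v hp1.reverse hp2.reverse
      (by simpa using hvs1) (by simpa using hvs2)
      (fun x hx => hl1 x (by simpa using hx))
      (fun x hx => hl2 x (by simpa using hx)) ha1 ha2
  have hnotboth : ¬ (H.Adj b₁ v ∧ H.Adj b₂ v) := by
    rintro ⟨hA, hB⟩
    have := two_le_ndeg_of_mem (G := H) hA.symm hB.symm hbne
    omega
  by_cases hc1 : H.Adj b₁ v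
  · have hc2 : ¬ H.Adj b₂ v := fun h => hnotboth ⟨hc1, h⟩
    exact key p₂.reverse hp2.reverse ha2 (fun x hx => hl2 x (by simpa using hx))
      hb2v hv hH hdeg hc2
  · exact key p₁.reverse hp1.reverse ha1 (fun x hx => hl1 x (by simpa using hx))
      hb1v hv hH hdeg hc1

end PaperPC
end

section
/- Let v be a heavy vertex of a tree T that is the common center of at least three vines, and let e be an edge incident to v. Then e is not used in some minimum path covering of T, and P(T) = P(T − e). -/
namespace PaperPC

open SimpleGraph

variable {V : Type*}

private lemma isAcyclic_anti {G H : SimpleGraph V} (h : H ≤ G) (hG : G.IsAcyclic) : H.IsAcyclic :=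
  fun _ c hc => hG (c.mapLe h) ((Walk.mapLe_isCycle h).2 hc)

private lemma del_key {G : SimpleGraph V} {x y : V}
    (hbr : ¬(G.deleteEdges {s(x,y)}).Reachable x y) :
    ∀ {z w : V} (_ : G.Walk z w), (G.deleteEdges {s(x,y)}).Reachable z w ∨
      ((G.deleteEdges {s(x,y)}).Reachable z x ∧ (G.deleteEdges {s(x,y)}).Reachable y w) ∨
      ((G.deleteEdges {s(x,y)}).Reachable z y ∧ (G.deleteEdges {s(x,y)}).Reachable x w) := by
  intro z w p
  induction p with
  | nil => exact Or.inl (Reachable.refl _)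
  | @cons a m b h q ih =>
    by_cases he : s(a, m) = s(x, y)
    · rw [Sym2.eq_iff] at he
      rcases he with ⟨rfl, rfl⟩ | ⟨rfl, rfl⟩
      · rcases ih with h1 | ⟨h2, h2'⟩ | ⟨h3, h3'⟩
        · exact Or.inr (Or.inl ⟨Reachable.refl _, h1⟩)
        · exact absurd h2.symm hbr
        · exact Or.inl h3'
      · rcases ih with h1 | ⟨h2, h2'⟩ | ⟨h3, h3'⟩
        · exact Or.inr (Or.inr ⟨Reachable.refl _, h1⟩)
        · exact Or.inl h2'
        · exact absurd h3 hbr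
    · have h' : (G.deleteEdges {s(x,y)}).Adj a m := by
        rw [deleteEdges_adj]
        exact ⟨h, by simpa using he⟩
      rcases ih with h1 | ⟨h2, h2'⟩ | ⟨h3, h3'⟩
      · exact Or.inl (h'.reachable.trans h1)
      · exact Or.inr (Or.inl ⟨h'.reachable.trans h2, h2'⟩)
      · exact Or.inr (Or.inr ⟨h'.reachable.trans h3, h3'⟩)

private lemma card_cc_del [Finite V] (G : SimpleGraph V) {x y : V} (hxy : G.Adj x y)
    (hbr : ¬(G.deleteEdges {s(x,y)}).Reachable x y) :
    Nat.card (G.deleteEdges {s(x,y)}).ConnectedComponent = Nat.card G.ConnectedComponent + 1 := by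
  classical
  have hle : G.deleteEdges {s(x,y)} ≤ G := deleteEdges_le _
  set G' := G.deleteEdges {s(x,y)} with hG'
  have key1 : ∀ (z : V), G.Reachable z x → G'.Reachable z x ∨ G'.Reachable z y := by
    intro z hr
    obtain ⟨p⟩ := hr
    rcases del_key hbr p with h1 | ⟨h2, _⟩ | ⟨h3, _⟩
    · exact Or.inl h1
    · exact Or.inl h2
    · exact Or.inr h3
  have key2 : ∀ (z z' : V), G.Reachable z z' → ¬G.Reachable z x → G'.Reachable z z' := by
    intro z z' hr hnx
    obtain ⟨p⟩ := hr
    rcases del_key hbr p with h1 | ⟨h2, _⟩ | ⟨h3, _⟩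
    · exact h1
    · exact absurd (h2.mono hle) hnx
    · exact absurd ((h3.mono hle).trans hxy.symm.reachable) hnx
  let q : G'.ConnectedComponent → G.ConnectedComponent :=
    ConnectedComponent.map (Hom.ofLE hle)
  have qmk : ∀ z : V, q (G'.connectedComponentMk z) = G.connectedComponentMk z := fun z => rfl
  let f : G'.ConnectedComponent → G.ConnectedComponent ⊕ Unit := fun d =>
    if d = G'.connectedComponentMk y then Sum.inr Unit.unit else Sum.inl (q d)
  have hinj : Function.Injective f := by
    intro d d'
    refine ConnectedComponent.ind₂ (fun z z' hf => ?_) d d'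
    by_cases h1 : G'.connectedComponentMk z = G'.connectedComponentMk y
    · by_cases h2 : G'.connectedComponentMk z' = G'.connectedComponentMk y
      · rw [h1, h2]
      · simp only [f, if_pos h1, if_neg h2] at hf
        exact absurd hf (by simp)
    · by_cases h2 : G'.connectedComponentMk z' = G'.connectedComponentMk y
      · simp only [f, if_pos h2, if_neg h1] at hf
        exact absurd hf (by simp)
      · simp only [f, if_neg h1, if_neg h2, Sum.inl.injEq, qmk] at hf
        have hzz' : G.Reachable z z' := ConnectedComponent.exact hf
        by_cases hzx : G.Reachable z x
        · have hz : G'.Reachable z x := by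
            rcases key1 z hzx with h | h
            · exact h
            · exact absurd (ConnectedComponent.sound h) h1
          have hz' : G'.Reachable z' x := by
            rcases key1 z' (hzz'.symm.trans hzx) with h | h
            · exact h
            · exact absurd (ConnectedComponent.sound h) h2
          exact ConnectedComponent.sound (hz.trans hz'.symm)
        · exact ConnectedComponent.sound (key2 z z' hzz' hzx)
  have hsurj : Function.Surjective f := by
    rintro (c | ⟨⟩)
    · refine ConnectedComponent.ind (fun w => ?_) c
      by_cases hwx : G.Reachable w x
      · refine ⟨G'.connectedComponentMk x, ?_⟩
        have hne : G'.connectedComponentMk x ≠ G'.connectedComponentMk y := by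
          intro h; exact hbr (ConnectedComponent.exact h)
        simp only [f, if_neg hne, qmk]
        exact congrArg Sum.inl (ConnectedComponent.sound hwx.symm)
      · refine ⟨G'.connectedComponentMk w, ?_⟩
        have hne : G'.connectedComponentMk w ≠ G'.connectedComponentMk y := by
          intro h
          have : G.Reachable w y := (ConnectedComponent.exact h).mono hle
          exact hwx (this.trans hxy.symm.reachable)
        simp only [f, if_neg hne, qmk]
    · exact ⟨G'.connectedComponentMk y, by simp [f]⟩
  have := Nat.card_eq_of_bijective f ⟨hinj, hsurj⟩
  rw [Nat.card_sum] at this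
  simpa using this

private lemma card_cc_add_ncard [Fintype V] :
    ∀ (n : ℕ) (H : SimpleGraph V), H.edgeSet.ncard = n → H.IsAcyclic →
      Nat.card H.ConnectedComponent + n = Nat.card V := by
  intro n
  induction n with
  | zero =>
    intro H h0 _
    have hbot : H = ⊥ := edgeSet_eq_empty.1 ((Set.ncard_eq_zero (Set.toFinite _)).1 h0)
    subst hbot
    have hbij : Function.Bijective ((⊥ : SimpleGraph V).connectedComponentMk) := by
      constructor
      · intro a b hab
        exact reachable_bot.1 (ConnectedComponent.exact hab)
      · intro c
        exact ConnectedComponent.ind (fun w => ⟨w, rfl⟩) c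
    rw [← Nat.card_eq_of_bijective _ hbij]
    omega
  | succ n ih =>
    intro H hcard hac
    have hne : H.edgeSet.Nonempty := by
      rw [Set.nonempty_iff_ne_empty]
      intro h
      rw [h, Set.ncard_empty] at hcard
      omega
    obtain ⟨x, y, he⟩ := Sym2.exists.1 hne
    have hadj : H.Adj x y := he
    have hbridge : H.IsBridge s(x, y) := isAcyclic_iff_forall_edge_isBridge.1 hac he
    have hbr : ¬(H.deleteEdges {s(x,y)}).Reachable x y := (isBridge_iff.1 hbridge)
    have hdel : (H.deleteEdges {s(x,y)}).edgeSet.ncard = n := by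
      rw [edgeSet_deleteEdges]
      have := Set.ncard_diff_singleton_of_mem he
      rw [this, hcard]
      omega
    have hdelac : (H.deleteEdges {s(x,y)}).IsAcyclic := isAcyclic_anti (deleteEdges_le _) hac
    have := ih (H.deleteEdges {s(x,y)}) hdel hdelac
    rw [card_cc_del H hadj hbr] at this
    omega

private lemma mem_pair_of_ncard_le_two_s11 [Finite V] {N : Set V} (h : N.ncard ≤ 2)
    {w v y : V} (hw : w ∈ N) (hv : v ∈ N) (hwv : w ≠ v) (hy : y ∈ N) : y = w ∨ y = v := by
  by_contra hc
  push_neg at hc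
  have hsub : ({y, w, v} : Set V) ⊆ N := by
    intro z hz; rcases hz with rfl | rfl | rfl <;> assumption
  have h3 : ({y, w, v} : Set V).ncard = 3 := by
    rw [Set.ncard_insert_of_notMem (by simp [hc.1, hc.2]),
      Set.ncard_insert_of_notMem (by simp [hwv]), Set.ncard_singleton]
  have := Set.ncard_le_ncard hsub (Set.toFinite _)
  omega

private lemma eq_of_ncard_le_one [Finite V] {N : Set V} (h : N.ncard ≤ 1)
    {a b : V} (ha : a ∈ N) (hb : b ∈ N) : a = b := by
  by_contra hc
  have hsub : ({a, b} : Set V) ⊆ N := by intro z hz; rcases hz with rfl | rfl <;> assumption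
  have := Set.ncard_le_ncard hsub (Set.toFinite _)
  rw [Set.ncard_pair hc] at this
  omega

private lemma mem_ndeg {T : SimpleGraph V} {x y : V} (h : T.Adj x y) : y ∈ T.neighborSet x := h

/-- every `T`-edge at a vertex of a "light path hanging from `w`/`v`" is a path edge or
one of the two boundary edges. -/
private lemma vine_edge_cover_aux [Finite V] {T : SimpleGraph V} {v : V} :
    ∀ {c b : V} (p : T.Walk c b), p.IsPath → (∀ z ∈ p.support, ndeg T z ≤ 2) →
      T.Adj b v → v ∉ p.support →
      ∀ w, T.Adj c w → w ∉ p.support → w ≠ v →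
      ∀ x ∈ p.support, ∀ y, T.Adj x y →
        s(x, y) ∈ p.edges ∨ (x = c ∧ y = w) ∨ (x = b ∧ y = v) := by
  intro c b p
  induction p with
  | nil =>
    intro _ hlight hbv hvp w hcw hwp hwv x hx y hxy
    simp only [Walk.support_nil, List.mem_singleton] at hx
    subst hx
    have := mem_pair_of_ncard_le_two_s11 (hlight x (by simp)) (mem_ndeg hcw) (mem_ndeg hbv) hwv
      (mem_ndeg hxy)
    rcases this with rfl | rfl
    · exact Or.inr (Or.inl ⟨rfl, rfl⟩)
    · exact Or.inr (Or.inr ⟨rfl, rfl⟩)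
  | @cons c d b h q ih =>
    intro hp hlight hbv hvp w hcw hwp hwv x hx y hxy
    rw [Walk.support_cons, List.mem_cons] at hx
    rcases hx with rfl | hx
    · have hwd : w ≠ d := by
        intro h'; exact hwp (by rw [h', Walk.support_cons]; exact List.mem_cons_of_mem _ q.start_mem_support)
      have := mem_pair_of_ncard_le_two_s11 (hlight x (by simp)) (mem_ndeg hcw) (mem_ndeg h) hwd
        (mem_ndeg hxy)
      rcases this with rfl | rfl
      · exact Or.inr (Or.inl ⟨rfl, rfl⟩)
      · exact Or.inl (by simp [Walk.edges_cons])
    · have hcq : c ∉ q.support := (Walk.cons_isPath_iff h q).1 hp |>.2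
      have hres := ih ((Walk.cons_isPath_iff h q).1 hp).1
        (fun z hz => hlight z (by simp [Walk.support_cons, hz])) hbv
        (fun hv' => hvp (by simp [Walk.support_cons, hv'])) c h.symm hcq
        (fun h' => hvp (h' ▸ (by simp [Walk.support_cons, q.start_mem_support])))
        x hx y hxy
      rcases hres with h1 | ⟨rfl, rfl⟩ | h3
      · exact Or.inl (by simp [Walk.edges_cons, h1])
      · exact Or.inl (by simp [Walk.edges_cons, Sym2.eq_swap])
      · exact Or.inr (Or.inr h3)

private lemma vine_edge_cover [Finite V] {T : SimpleGraph V} {v a b : V} (p : T.Walk a b)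
    (hp : p.IsPath) (hlight : ∀ z ∈ p.support, ndeg T z ≤ 2) (hleaf : ndeg T a = 1)
    (hbv : T.Adj b v) (hvp : v ∉ p.support) :
    ∀ x ∈ p.support, ∀ y, T.Adj x y → s(x, y) ∈ p.edges ∨ (x = b ∧ y = v) := by
  cases p with
  | nil =>
    intro x hx y hxy
    simp only [Walk.support_nil, List.mem_singleton] at hx
    subst hx
    exact Or.inr ⟨rfl, eq_of_ncard_le_one (le_of_eq hleaf) (mem_ndeg hxy) (mem_ndeg hbv)⟩
  | @cons a d b h q =>
    intro x hx y hxy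
    rw [Walk.support_cons, List.mem_cons] at hx
    rcases hx with rfl | hx
    · have : y = d := eq_of_ncard_le_one (le_of_eq hleaf) (mem_ndeg hxy) (mem_ndeg h)
      subst this
      exact Or.inl (by simp [Walk.edges_cons])
    · have hcq : a ∉ q.support := (Walk.cons_isPath_iff h q).1 hp |>.2
      have hres := vine_edge_cover_aux q ((Walk.cons_isPath_iff h q).1 hp).1
        (fun z hz => hlight z (by simp [Walk.support_cons, hz])) hbv
        (fun hv' => hvp (by simp [Walk.support_cons, hv'])) a h.symm hcq
        (fun h' => hvp (h' ▸ (by simp [Walk.support_cons, q.start_mem_support])))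
        x hx y hxy
      rcases hres with h1 | ⟨rfl, rfl⟩ | h3
      · exact Or.inl (by simp [Walk.edges_cons, h1])
      · exact Or.inl (by simp [Walk.edges_cons, Sym2.eq_swap])
      · exact Or.inr h3

/-- uniqueness of the leaf at the end of an all-light path with prescribed extra neighbor. -/
private lemma leaf_path_unique [Finite V] {T : SimpleGraph V} :
    ∀ {x a a' : V} (q : T.Walk x a) (q' : T.Walk x a'), q.IsPath → q'.IsPath →
      (∀ z ∈ q.support, ndeg T z ≤ 2) → (∀ z ∈ q'.support, ndeg T z ≤ 2) →
      ndeg T a = 1 → ndeg T a' = 1 →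
      ∀ w, T.Adj x w → w ∉ q.support → w ∉ q'.support → a = a' := by
  intro x a a' q
  induction q with
  | nil =>
    intro q' _ hq' _ _ hleaf hleaf' w hxw hwq hwq'
    cases q' with
    | nil => rfl
    | @cons x d a' h' r' =>
      exfalso
      have hwd : w = d :=
        eq_of_ncard_le_one (le_of_eq hleaf) (mem_ndeg hxw) (mem_ndeg h')
      exact hwq' (by rw [hwd, Walk.support_cons]; exact List.mem_cons_of_mem _ r'.start_mem_support)
  | @cons x d a h r ih =>
    intro q' hq hq' hlight hlight' hleaf hleaf' w hxw hwq hwq'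
    cases q' with
    | nil =>
      exfalso
      have hwd : w = d :=
        eq_of_ncard_le_one (le_of_eq hleaf') (mem_ndeg hxw) (mem_ndeg h)
      exact hwq (by rw [hwd, Walk.support_cons]; exact List.mem_cons_of_mem _ r.start_mem_support)
    | @cons x d' a' h' r' =>
      have hwd : w ≠ d := fun h'' =>
        hwq (by rw [h'', Walk.support_cons]; exact List.mem_cons_of_mem _ r.start_mem_support)
      have hdd' : d' = w ∨ d' = d :=
        mem_pair_of_ncard_le_two_s11 (hlight x (by simp)) (mem_ndeg hxw) (mem_ndeg h) hwd
          (mem_ndeg h')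
      have hwd' : w ≠ d' := fun h'' =>
        hwq' (by rw [h'', Walk.support_cons]; exact List.mem_cons_of_mem _ r'.start_mem_support)
      rcases hdd' with rfl | rfl
      · exact absurd rfl hwd'
      · exact ih r' ((Walk.cons_isPath_iff h r).1 hq).1 ((Walk.cons_isPath_iff h' r').1 hq').1
          (fun z hz => hlight z (by simp [Walk.support_cons, hz]))
          (fun z hz => hlight' z (by simp [Walk.support_cons, hz])) hleaf hleaf'
          x h.symm ((Walk.cons_isPath_iff h r).1 hq).2 ((Walk.cons_isPath_iff h' r').1 hq').2

private lemma isPath_concat {G : SimpleGraph V} {a b c : V} {p : G.Walk a b} (hp : p.IsPath)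
    (h : G.Adj b c) (hc : c ∉ p.support) : (p.concat h).IsPath := by
  rw [← Walk.isPath_reverse_iff, Walk.reverse_concat]
  exact hp.reverse.cons (by simpa [Walk.support_reverse] using hc)

/-- count of "path neighbors" of a vertex along a path walk. -/
private lemma walk_nbr_ncard [Finite V] {G : SimpleGraph V} :
    ∀ {a b : V} (p : G.Walk a b), p.IsPath →
      (∀ x, {y | s(x, y) ∈ p.edges}.ncard ≤ 2) ∧ {y | s(a, y) ∈ p.edges}.ncard ≤ 1 := by
  intro a b p
  induction p with
  | nil =>
    intro _
    constructor
    · intro x; simp [Walk.edges_nil, Set.ncard_empty]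
    · simp [Walk.edges_nil, Set.ncard_empty]
  | @cons a c b h q ih =>
    intro hp
    obtain ⟨hq, haq⟩ := (Walk.cons_isPath_iff h q).1 hp
    obtain ⟨ih2, _⟩ := ih hq
    have hstart : {y | s(a, y) ∈ (Walk.cons h q).edges}.ncard ≤ 1 := by
      have hsub : {y | s(a, y) ∈ (Walk.cons h q).edges} ⊆ {c} := by
        intro y hy
        simp only [Walk.edges_cons, List.mem_cons, Set.mem_setOf_eq] at hy
        rcases hy with hy | hy
        · rw [Sym2.eq_iff] at hy
          rcases hy with ⟨-, rfl⟩ | ⟨rfl, rfl⟩ <;> simp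
        · exact absurd (q.fst_mem_support_of_mem_edges hy) haq
      simpa using Set.ncard_le_ncard hsub (Set.toFinite _)
    refine ⟨fun x => ?_, hstart⟩
    by_cases hxa : x = a
    · subst hxa; omega
    by_cases hxc : x = c
    · subst hxc
      obtain ⟨-, ihc⟩ := ih hq
      have hsub : {y | s(x, y) ∈ (Walk.cons h q).edges} ⊆ insert a {y | s(x, y) ∈ q.edges} := by
        intro y hy
        simp only [Walk.edges_cons, List.mem_cons, Set.mem_setOf_eq] at hy
        rcases hy with hy | hy
        · rw [Sym2.eq_iff] at hy
          rcases hy with ⟨rfl, rfl⟩ | ⟨-, rfl⟩ <;> simp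
        · exact Set.mem_insert_of_mem _ hy
      calc {y | s(x, y) ∈ (Walk.cons h q).edges}.ncard
          ≤ (insert a {y | s(x, y) ∈ q.edges}).ncard := Set.ncard_le_ncard hsub (Set.toFinite _)
        _ ≤ {y | s(x, y) ∈ q.edges}.ncard + 1 := Set.ncard_insert_le _ _
        _ ≤ 2 := by omega
    · have hsub : {y | s(x, y) ∈ (Walk.cons h q).edges} ⊆ {y | s(x, y) ∈ q.edges} := by
        intro y hy
        simp only [Walk.edges_cons, List.mem_cons, Set.mem_setOf_eq] at hy
        rcases hy with hy | hy
        · rw [Sym2.eq_iff] at hy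
          rcases hy with ⟨rfl, -⟩ | ⟨rfl, -⟩
          · exact absurd rfl hxa
          · exact absurd rfl hxc
        · exact hy
      exact le_trans (Set.ncard_le_ncard hsub (Set.toFinite _)) (ih2 x)

private lemma vines_disjoint [Finite V] {T : SimpleGraph V} (hT : T.IsTree)
    {v a b a' b' : V} {p : T.Walk a b} {p' : T.Walk a' b'}
    (h : IsVineWithCenter T p v) (h' : IsVineWithCenter T p' v) (hne : a ≠ a') :
    ∀ x, x ∈ p.support → x ∉ p'.support := by
  classical
  obtain ⟨⟨hp, hleaf, hlight, -⟩, hbv, hheavy⟩ := h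
  obtain ⟨⟨hp', hleaf', hlight', -⟩, hbv', -⟩ := h'
  have hvp : v ∉ p.support := fun hm => by have := hlight v hm; omega
  have hvp' : v ∉ p'.support := fun hm => by have := hlight' v hm; omega
  intro x hx hx'
  have hxv : x ≠ v := fun h => hvp (h ▸ hx)
  -- the unique path from x to v
  have hdv : v ∉ (p.dropUntil x hx).support :=
    fun hm => hvp (Walk.support_dropUntil_subset _ _ hm)
  have hdv' : v ∉ (p'.dropUntil x hx').support :=
    fun hm => hvp' (Walk.support_dropUntil_subset _ _ hm)
  set r : T.Walk x v := (p.dropUntil x hx).concat hbv with hrdef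
  set r' : T.Walk x v := (p'.dropUntil x hx').concat hbv' with hrdef'
  have hrpath : r.IsPath := isPath_concat (hp.dropUntil hx) hbv hdv
  have hrpath' : r'.IsPath := isPath_concat (hp'.dropUntil hx') hbv' hdv'
  obtain ⟨P, -, hPuniq⟩ := hT.existsUnique_path x v
  have hrr' : r = r' := (hPuniq r hrpath).trans (hPuniq r' hrpath').symm
  obtain ⟨d, hxd, r₀, hr⟩ := r.exists_eq_cons_of_ne hxv
  -- d is not on the prefix of p before x, nor on that of p'
  have hdnottake : ∀ {aa bb : V} (pp : T.Walk aa bb) (hxx : x ∈ pp.support) (hppv : v ∉ pp.support)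
      (hbbv : T.Adj bb v), pp.IsPath → (pp.dropUntil x hxx).concat hbbv = r →
      d ∉ (pp.takeUntil x hxx).support := by
    intro aa bb pp hxx hppv hbbv hpp heq hdmem
    have hdr : d ∈ r.support := by rw [hr]; simp [Walk.support_cons, r₀.start_mem_support]
    have hdx : d ≠ x := by
      intro hdx
      have : r.support = x :: r₀.support := by rw [hr, Walk.support_cons]
      have hnodup := hrpath.support_nodup
      rw [this] at hnodup
      exact (List.nodup_cons.1 hnodup).1 (hdx ▸ r₀.start_mem_support)
    rw [← heq, Walk.support_concat, List.mem_append] at hdr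
    rcases hdr with hdr | hdr
    · -- d in dropUntil support
      have hdtail : d ∈ (pp.dropUntil x hxx).support.tail := by
        have hc := Walk.support_eq_cons (pp.dropUntil x hxx)
        rw [hc, List.mem_cons] at hdr
        rcases hdr with rfl | hdr
        · exact absurd rfl hdx
        · exact hdr
      have hnodup : (pp.takeUntil x hxx).support.Nodup ∧
          List.Disjoint ((pp.takeUntil x hxx).support) ((pp.dropUntil x hxx).support.tail) := by
        have := hpp.support_nodup
        rw [← Walk.take_spec pp hxx, Walk.support_append] at this
        exact ⟨(List.nodup_append.1 this).1, List.disjoint_of_nodup_append this⟩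
      exact hnodup.2 hdmem hdtail
    · -- d = v
      simp only [List.mem_singleton] at hdr
      subst hdr
      exact hppv (Walk.support_takeUntil_subset _ _ hdmem)
  have hd1 : d ∉ (p.takeUntil x hx).support :=
    hdnottake p hx hvp hbv hp rfl
  have hd2 : d ∉ (p'.takeUntil x hx').support :=
    hdnottake p' hx' hvp' hbv' hp' hrr'.symm
  -- now apply uniqueness of the leaf
  have : a = a' := by
    refine leaf_path_unique (p.takeUntil x hx).reverse (p'.takeUntil x hx').reverse
      (hp.takeUntil hx).reverse (hp'.takeUntil hx').reverse
      (fun z hz => hlight z (Walk.support_takeUntil_subset _ _ (by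
        simpa [Walk.support_reverse] using hz)))
      (fun z hz => hlight' z (Walk.support_takeUntil_subset _ _ (by
        simpa [Walk.support_reverse] using hz)))
      hleaf hleaf' d hxd ?_ ?_
    · simpa [Walk.support_reverse] using hd1
    · simpa [Walk.support_reverse] using hd2
  exact hne this

private lemma pcset_nonempty (G : SimpleGraph V) :
    {k | ∃ H ≤ G, IsLinearForest H ∧ numPaths H = k}.Nonempty :=
  ⟨numPaths ⊥, ⊥, bot_le, ⟨isAcyclic_bot, fun v => by simp [ndeg, neighborSet]⟩, rfl⟩

private lemma key_s11 [Fintype V] (T : SimpleGraph V) (hT : T.IsTree) {v u a₁ b₁ a₂ b₂ a₃ b₃ : V}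
    (p₁ : T.Walk a₁ b₁) (p₂ : T.Walk a₂ b₂) (p₃ : T.Walk a₃ b₃)
    (h₁ : IsVineWithCenter T p₁ v) (h₂ : IsVineWithCenter T p₂ v)
    (h₃ : IsVineWithCenter T p₃ v)
    (hd12 : ∀ x, x ∈ p₁.support → x ∉ p₂.support)
    (hd13 : ∀ x, x ∈ p₁.support → x ∉ p₃.support)
    (hd23 : ∀ x, x ∈ p₂.support → x ∉ p₃.support)
    (hvu : T.Adj v u) (hu1 : u ≠ b₁) (hu2 : u ≠ b₂) :
    (∃ H, IsMinPathCover T H ∧ s(v,u) ∉ H.edgeSet) ∧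
      pathCoverNumber T = pathCoverNumber (T.deleteEdges {s(v,u)}) := by
  classical
  obtain ⟨⟨hp₁, hleaf₁, hlight₁, -⟩, hb1v, hheavy⟩ := h₁
  obtain ⟨⟨hp₂, hleaf₂, hlight₂, -⟩, hb2v, -⟩ := h₂
  obtain ⟨⟨hp₃, hleaf₃, hlight₃, -⟩, hb3v, -⟩ := h₃
  have hv1 : v ∉ p₁.support := fun hm => by have := hlight₁ v hm; omega
  have hv2 : v ∉ p₂.support := fun hm => by have := hlight₂ v hm; omega
  have hv3 : v ∉ p₃.support := fun hm => by have := hlight₃ v hm; omega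
  have hvb1 : v ≠ b₁ := fun h => hv1 (h ▸ p₁.end_mem_support)
  have hvb2 : v ≠ b₂ := fun h => hv2 (h ▸ p₂.end_mem_support)
  have hb12 : b₁ ≠ b₂ := fun h => hd12 b₁ p₁.end_mem_support (h ▸ p₂.end_mem_support)
  obtain ⟨H, hHle, ⟨hHac, hHdeg⟩, hHnum⟩ := Nat.sInf_mem (pcset_nonempty T)
  have hHnum' : numPaths H = pathCoverNumber T := hHnum
  -- the modified edge set
  set Sv : Set V := {x | x ∈ p₁.support ∨ x ∈ p₂.support ∨ x ∈ p₃.support} with hSv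
  set K : Set (Sym2 V) := {f | f ∈ H.edgeSet ∧ v ∉ f ∧ ∀ x ∈ Sv, x ∉ f} with hK
  set W : Set (Sym2 V) := {f | f ∈ p₁.edges ∨ f ∈ p₂.edges ∨ f ∈ p₃.edges} with hW
  set Sp : Set (Sym2 V) := {s(v,b₁), s(v,b₂)} with hSp
  set E' : Set (Sym2 V) := K ∪ W ∪ Sp with hE'
  have hSpmem : ∀ f, f ∈ Sp → f = s(v,b₁) ∨ f = s(v,b₂) := by
    intro f hf
    rw [hSp, Set.mem_insert_iff, Set.mem_singleton_iff] at hf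
    exact hf
  -- endpoints of W edges lie in Sv
  have hWsup : ∀ x y : V, s(x,y) ∈ W → x ∈ Sv := by
    intro x y hf
    rw [hW, Set.mem_setOf_eq] at hf
    rcases hf with hf | hf | hf
    · exact Or.inl (p₁.fst_mem_support_of_mem_edges hf)
    · exact Or.inr (Or.inl (p₂.fst_mem_support_of_mem_edges hf))
    · exact Or.inr (Or.inr (p₃.fst_mem_support_of_mem_edges hf))
  have hvSv : v ∉ Sv := by
    rw [hSv]; intro h; rcases h with h | h | h
    · exact hv1 h
    · exact hv2 h
    · exact hv3 h
  have hE'T : E' ⊆ T.edgeSet := by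
    rintro f ((hf | hf) | hf)
    · exact (edgeSet_mono hHle) hf.1
    · rw [hW, Set.mem_setOf_eq] at hf
      rcases hf with hf | hf | hf
      · exact p₁.edges_subset_edgeSet hf
      · exact p₂.edges_subset_edgeSet hf
      · exact p₃.edges_subset_edgeSet hf
    · rcases hf with rfl | rfl
      · exact hb1v.symm
      · exact hb2v.symm
  set H' : SimpleGraph V := fromEdgeSet E' with hH'
  have hH'le : H' ≤ T := by
    rw [hH']
    exact le_of_le_of_eq (fromEdgeSet_mono hE'T) (fromEdgeSet_edgeSet T)
  have hH'edge : H'.edgeSet = E' := by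
    rw [hH', edgeSet_fromEdgeSet]
    ext f
    simp only [Set.mem_diff, Set.mem_setOf_eq, and_iff_left_iff_imp]
    intro hf
    exact T.not_isDiag_of_mem_edgeSet (hE'T hf)
  have hH'ac : H'.IsAcyclic := isAcyclic_anti hH'le hT.IsAcyclic
  -- e is not an edge of H'
  have heE' : s(v, u) ∉ E' := by
    rintro ((hf | hf) | hf)
    · exact hf.2.1 (Sym2.mem_mk_left v u)
    · exact hvSv (hWsup v u hf)
    · rcases hSpmem _ hf with hf | hf <;> rw [Sym2.eq_iff] at hf
      · rcases hf with ⟨-, h⟩ | ⟨h, -⟩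
        · exact hu1 h
        · exact hvb1 h
      · rcases hf with ⟨-, h⟩ | ⟨h, -⟩
        · exact hu2 h
        · exact hvb2 h
  -- degree bound
  have hend1 : {y | s(b₁, y) ∈ p₁.edges}.ncard ≤ 1 := by
    have := (walk_nbr_ncard p₁.reverse hp₁.reverse).2
    simpa [Walk.edges_reverse] using this
  have hend2 : {y | s(b₂, y) ∈ p₂.edges}.ncard ≤ 1 := by
    have := (walk_nbr_ncard p₂.reverse hp₂.reverse).2
    simpa [Walk.edges_reverse] using this
  have hdeg : ∀ x, ndeg H' x ≤ 2 := by
    intro x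
    by_cases hxv : x = v
    · subst hxv
      have hsub : H'.neighborSet x ⊆ {b₁, b₂} := by
        intro y hy
        have hadj : H'.Adj x y := hy
        rw [hH', fromEdgeSet_adj] at hadj
        obtain ⟨hmem, hne⟩ := hadj
        rcases hmem with (hk | hw) | hsp
        · exact absurd (Sym2.mem_mk_left x y) hk.2.1
        · exact absurd (hWsup x y hw) hvSv
        · rcases hSpmem _ hsp with hf | hf <;> rw [Sym2.eq_iff] at hf
          · rcases hf with ⟨-, rfl⟩ | ⟨rfl, rfl⟩
            · exact Set.mem_insert _ _
            · exact absurd rfl hne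
          · rcases hf with ⟨-, rfl⟩ | ⟨rfl, rfl⟩
            · exact Set.mem_insert_of_mem _ rfl
            · exact absurd rfl hne
      calc ndeg H' x ≤ ({b₁, b₂} : Set V).ncard := Set.ncard_le_ncard hsub (Set.toFinite _)
        _ = 2 := Set.ncard_pair hb12
    by_cases hxSv : x ∈ Sv
    · -- x is a vine vertex
      have hxsub : ∀ {aa bb : V} (pp : T.Walk aa bb), x ∈ pp.support →
          (∀ z ∈ pp.support, ndeg T z ≤ 2) →
          (f_ : ∀ y, s(x,y) ∈ W → s(x,y) ∈ pp.edges) →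
          H'.neighborSet x ⊆ {y | s(x, y) ∈ pp.edges} ∪ {y | (x = b₁ ∨ x = b₂) ∧ y = v} := by
        intro aa bb pp hxp hlightp hWonly y hy
        have hadj : H'.Adj x y := hy
        rw [hH', fromEdgeSet_adj] at hadj
        obtain ⟨hmem, hne⟩ := hadj
        rcases hmem with (hk | hw) | hsp
        · exact absurd (Sym2.mem_mk_left x y) (fun h => hk.2.2 x hxSv h)
        · exact Or.inl (hWonly y hw)
        · rcases hSpmem _ hsp with hf | hf <;> rw [Sym2.eq_iff] at hf
          · rcases hf with ⟨rfl, rfl⟩ | ⟨rfl, rfl⟩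
            · exact absurd rfl hxv
            · exact Or.inr ⟨Or.inl rfl, rfl⟩
          · rcases hf with ⟨rfl, rfl⟩ | ⟨rfl, rfl⟩
            · exact absurd rfl hxv
            · exact Or.inr ⟨Or.inr rfl, rfl⟩
      -- case on which vine x belongs to
      rcases hxSv with hx1 | hx2 | hx3
      · have hWonly : ∀ y, s(x,y) ∈ W → s(x,y) ∈ p₁.edges := by
          intro y hw
          rw [hW, Set.mem_setOf_eq] at hw
          rcases hw with hw | hw | hw
          · exact hw
          · exact absurd (p₂.fst_mem_support_of_mem_edges hw) (hd12 x hx1)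
          · exact absurd (p₃.fst_mem_support_of_mem_edges hw) (hd13 x hx1)
        have hsub := hxsub p₁ hx1 hlight₁ hWonly
        by_cases hxb : x = b₁ ∨ x = b₂
        · have hxb1 : x = b₁ := by
            rcases hxb with h | h
            · exact h
            · exact absurd (show x ∈ p₂.support by rw [h]; exact p₂.end_mem_support) (fun hm => hd12 x hx1 hm)
          calc ndeg H' x ≤ ({y | s(x, y) ∈ p₁.edges} ∪ {y | (x = b₁ ∨ x = b₂) ∧ y = v}).ncard :=
              Set.ncard_le_ncard hsub (Set.toFinite _)
            _ ≤ {y | s(x, y) ∈ p₁.edges}.ncard + {y | (x = b₁ ∨ x = b₂) ∧ y = v}.ncard :=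
              Set.ncard_union_le _ _
            _ ≤ 1 + 1 := by
              refine add_le_add (by rw [hxb1]; exact hend1) ?_
              have : {y | (x = b₁ ∨ x = b₂) ∧ y = v} ⊆ {v} := fun y hy => hy.2
              simpa using Set.ncard_le_ncard this (Set.toFinite _)
            _ ≤ 2 := by omega
        · have hsub2 : H'.neighborSet x ⊆ {y | s(x, y) ∈ p₁.edges} := by
            intro y hy
            rcases hsub hy with h | h
            · exact h
            · exact absurd h.1 hxb
          calc ndeg H' x ≤ {y | s(x, y) ∈ p₁.edges}.ncard :=
              Set.ncard_le_ncard hsub2 (Set.toFinite _)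
            _ ≤ 2 := (walk_nbr_ncard p₁ hp₁).1 x
      · have hWonly : ∀ y, s(x,y) ∈ W → s(x,y) ∈ p₂.edges := by
          intro y hw
          rw [hW, Set.mem_setOf_eq] at hw
          rcases hw with hw | hw | hw
          · exact absurd hx2 (hd12 x (p₁.fst_mem_support_of_mem_edges hw))
          · exact hw
          · exact absurd (p₃.fst_mem_support_of_mem_edges hw) (hd23 x hx2)
        have hsub := hxsub p₂ hx2 hlight₂ hWonly
        by_cases hxb : x = b₁ ∨ x = b₂
        · have hxb2 : x = b₂ := by
            rcases hxb with h | h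
            · exact absurd (show x ∈ p₁.support by rw [h]; exact p₁.end_mem_support) (fun hm => hd12 x hm hx2)
            · exact h
          calc ndeg H' x ≤ ({y | s(x, y) ∈ p₂.edges} ∪ {y | (x = b₁ ∨ x = b₂) ∧ y = v}).ncard :=
              Set.ncard_le_ncard hsub (Set.toFinite _)
            _ ≤ {y | s(x, y) ∈ p₂.edges}.ncard + {y | (x = b₁ ∨ x = b₂) ∧ y = v}.ncard :=
              Set.ncard_union_le _ _
            _ ≤ 1 + 1 := by
              refine add_le_add (by rw [hxb2]; exact hend2) ?_
              have : {y | (x = b₁ ∨ x = b₂) ∧ y = v} ⊆ {v} := fun y hy => hy.2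
              simpa using Set.ncard_le_ncard this (Set.toFinite _)
            _ ≤ 2 := by omega
        · have hsub2 : H'.neighborSet x ⊆ {y | s(x, y) ∈ p₂.edges} := by
            intro y hy
            rcases hsub hy with h | h
            · exact h
            · exact absurd h.1 hxb
          calc ndeg H' x ≤ {y | s(x, y) ∈ p₂.edges}.ncard :=
              Set.ncard_le_ncard hsub2 (Set.toFinite _)
            _ ≤ 2 := (walk_nbr_ncard p₂ hp₂).1 x
      · have hWonly : ∀ y, s(x,y) ∈ W → s(x,y) ∈ p₃.edges := by
          intro y hw
          rw [hW, Set.mem_setOf_eq] at hw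
          rcases hw with hw | hw | hw
          · exact absurd hx3 (hd13 x (p₁.fst_mem_support_of_mem_edges hw))
          · exact absurd hx3 (hd23 x (p₂.fst_mem_support_of_mem_edges hw))
          · exact hw
        have hsub := hxsub p₃ hx3 hlight₃ hWonly
        have hxb : ¬(x = b₁ ∨ x = b₂) := by
          rintro (h | h)
          · exact hd13 x (by rw [h]; exact p₁.end_mem_support) hx3
          · exact hd23 x (by rw [h]; exact p₂.end_mem_support) hx3
        have hsub2 : H'.neighborSet x ⊆ {y | s(x, y) ∈ p₃.edges} := by
          intro y hy
          rcases hsub hy with h | h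
          · exact h
          · exact absurd h.1 hxb
        calc ndeg H' x ≤ {y | s(x, y) ∈ p₃.edges}.ncard :=
            Set.ncard_le_ncard hsub2 (Set.toFinite _)
          _ ≤ 2 := (walk_nbr_ncard p₃ hp₃).1 x
    · -- generic vertex
      have hsub : H'.neighborSet x ⊆ H.neighborSet x := by
        intro y hy
        have hadj : H'.Adj x y := hy
        rw [hH', fromEdgeSet_adj] at hadj
        obtain ⟨hmem, hne⟩ := hadj
        rcases hmem with (hk | hw) | hsp
        · exact hk.1
        · exact absurd (hWsup x y hw) hxSv
        · exfalso
          rcases hSpmem _ hsp with hf | hf <;> rw [Sym2.eq_iff] at hf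
          · rcases hf with ⟨rfl, -⟩ | ⟨rfl, -⟩
            · exact hxv rfl
            · exact hxSv (Or.inl p₁.end_mem_support)
          · rcases hf with ⟨rfl, -⟩ | ⟨rfl, -⟩
            · exact hxv rfl
            · exact hxSv (Or.inr (Or.inl p₂.end_mem_support))
      calc ndeg H' x ≤ ndeg H x := Set.ncard_le_ncard hsub (Set.toFinite _)
        _ ≤ 2 := hHdeg x
  -- edge count
  have hKsub : K ⊆ H.edgeSet := fun f hf => hf.1
  have hRsub : H.edgeSet \ K ⊆ H.incidenceSet v ∪ (H.edgeSet ∩ W) := by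
    intro f hf
    obtain ⟨hfH, hfK⟩ := hf
    rw [hK, Set.mem_setOf_eq] at hfK
    push_neg at hfK
    by_cases hvf : v ∈ f
    · exact Or.inl ⟨hfH, hvf⟩
    · obtain ⟨x, hxSv, hxf⟩ := hfK hfH hvf
      obtain ⟨y, rfl⟩ := Sym2.mem_iff_exists.1 hxf
      have hTadj : T.Adj x y := (edgeSet_mono hHle) hfH
      have hyv : y ≠ v := fun h => hvf (h ▸ Sym2.mem_mk_right x y)
      refine Or.inr ⟨hfH, ?_⟩
      rw [hW, Set.mem_setOf_eq]
      rcases hxSv with hx | hx | hx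
      · rcases vine_edge_cover p₁ hp₁ hlight₁ hleaf₁ hb1v hv1 x hx y hTadj with h | ⟨-, h⟩
        · exact Or.inl h
        · exact absurd h hyv
      · rcases vine_edge_cover p₂ hp₂ hlight₂ hleaf₂ hb2v hv2 x hx y hTadj with h | ⟨-, h⟩
        · exact Or.inr (Or.inl h)
        · exact absurd h hyv
      · rcases vine_edge_cover p₃ hp₃ hlight₃ hleaf₃ hb3v hv3 x hx y hTadj with h | ⟨-, h⟩
        · exact Or.inr (Or.inr h)
        · exact absurd h hyv
  have hIncCard : (H.incidenceSet v).ncard ≤ 2 := by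
    have h1 : (H.incidenceSet v).ncard = (H.neighborSet v).ncard := by
      rw [← Nat.card_coe_set_eq, ← Nat.card_coe_set_eq]
      exact Nat.card_congr (H.incidenceSetEquivNeighborSet v)
    rw [h1]
    exact hHdeg v
  have hR : (H.edgeSet \ K).ncard ≤ 2 + (H.edgeSet ∩ W).ncard := by
    calc (H.edgeSet \ K).ncard
        ≤ (H.incidenceSet v ∪ (H.edgeSet ∩ W)).ncard :=
          Set.ncard_le_ncard hRsub (Set.toFinite _)
      _ ≤ (H.incidenceSet v).ncard + (H.edgeSet ∩ W).ncard := Set.ncard_union_le _ _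
      _ ≤ 2 + (H.edgeSet ∩ W).ncard := by omega
  have hdisjKW : Disjoint K W := by
    rw [Set.disjoint_left]
    intro f hfK hfW
    induction f using Sym2.ind with
    | _ x y => exact hfK.2.2 x (hWsup x y hfW) (Sym2.mem_mk_left x y)
  have hdisjSp : Disjoint (K ∪ W) Sp := by
    rw [Set.disjoint_left]
    intro f hf hsp
    rcases hSpmem _ hsp with rfl | rfl
    · rcases hf with hf | hf
      · exact hf.2.1 (Sym2.mem_mk_left v b₁)
      · exact hvSv (hWsup v b₁ hf)
    · rcases hf with hf | hf
      · exact hf.2.1 (Sym2.mem_mk_left v b₂)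
      · exact hvSv (hWsup v b₂ hf)
  have hSpcard : Sp.ncard = 2 := by
    rw [hSp]
    refine Set.ncard_pair ?_
    intro h
    rw [Sym2.eq_iff] at h
    rcases h with ⟨-, h⟩ | ⟨h, -⟩
    · exact hb12 h
    · exact hvb2 h
  have hE'card : E'.ncard = K.ncard + W.ncard + Sp.ncard := by
    rw [hE', Set.ncard_union_eq hdisjSp (Set.toFinite _) (Set.toFinite _),
      Set.ncard_union_eq hdisjKW (Set.toFinite _) (Set.toFinite _)]
  have hKR : (H.edgeSet \ K).ncard + K.ncard = H.edgeSet.ncard :=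
    Set.ncard_diff_add_ncard_of_subset hKsub (Set.toFinite _)
  have hHW : (H.edgeSet ∩ W).ncard ≤ W.ncard :=
    Set.ncard_le_ncard Set.inter_subset_right (Set.toFinite _)
  have hE'ge : H.edgeSet.ncard ≤ E'.ncard := by omega
  -- numPaths comparison
  have hcountH := card_cc_add_ncard H.edgeSet.ncard H rfl hHac
  have hcountH' := card_cc_add_ncard H'.edgeSet.ncard H' rfl hH'ac
  rw [hH'edge] at hcountH'
  have hnumle : numPaths H' ≤ numPaths H := by
    unfold numPaths
    omega
  have hH'mem : pathCoverNumber T ≤ numPaths H' :=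
    Nat.sInf_le ⟨H', hH'le, ⟨hH'ac, hdeg⟩, rfl⟩
  have hH'num : numPaths H' = pathCoverNumber T :=
    le_antisymm (hHnum' ▸ hnumle) hH'mem
  have heH' : s(v, u) ∉ H'.edgeSet := by rw [hH'edge]; exact heE'
  refine ⟨⟨H', ⟨hH'le, ⟨hH'ac, hdeg⟩, hH'num⟩, heH'⟩, ?_⟩
  -- part 2
  have hH'leT' : H' ≤ T.deleteEdges {s(v,u)} := by
    intro x y hxy
    rw [deleteEdges_adj]
    refine ⟨hH'le hxy, ?_⟩
    simp only [Set.mem_singleton_iff]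
    intro h
    exact heH' (h ▸ hxy)
  have hle1 : pathCoverNumber (T.deleteEdges {s(v,u)}) ≤ pathCoverNumber T := by
    rw [← hH'num]
    exact Nat.sInf_le ⟨H', hH'leT', ⟨hH'ac, hdeg⟩, rfl⟩
  have hle2 : pathCoverNumber T ≤ pathCoverNumber (T.deleteEdges {s(v,u)}) := by
    obtain ⟨K₂, hK2le, hK2lin, hK2num⟩ := Nat.sInf_mem (pcset_nonempty (T.deleteEdges {s(v,u)}))
    have : pathCoverNumber (T.deleteEdges {s(v,u)}) = numPaths K₂ := hK2num.symm
    rw [this]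
    exact Nat.sInf_le ⟨K₂, hK2le.trans (deleteEdges_le _), hK2lin, rfl⟩
  omega

/-- **Lemma (Statement 11).** Let `v` be a heavy vertex of a tree `T` which is the
common center of at least three vines, and let `e` be an edge incident to `v`.  Then
`e` is unused in some minimum path covering of `T`, and `P(T) = P(T − e)`. -/
theorem center_three_vines_delete_edge {V : Type*} [Fintype V] (T : SimpleGraph V)
    (hT : T.IsTree) {v a₁ b₁ a₂ b₂ a₃ b₃ : V}
    (p₁ : T.Walk a₁ b₁) (p₂ : T.Walk a₂ b₂) (p₃ : T.Walk a₃ b₃)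
    (h₁ : IsVineWithCenter T p₁ v) (h₂ : IsVineWithCenter T p₂ v)
    (h₃ : IsVineWithCenter T p₃ v)
    (hne : a₁ ≠ a₂ ∧ a₁ ≠ a₃ ∧ a₂ ≠ a₃)
    (e : Sym2 V) (he : e ∈ T.edgeSet) (hv : v ∈ e) :
    (∃ H, IsMinPathCover T H ∧ e ∉ H.edgeSet) ∧
      pathCoverNumber T = pathCoverNumber (T.deleteEdges {e}) := by
  classical
  obtain ⟨u, rfl⟩ := Sym2.mem_iff_exists.1 hv
  have hvu : T.Adj v u := he
  obtain ⟨h12, h13, h23⟩ := hne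
  have d12 := vines_disjoint hT h₁ h₂ h12
  have d13 := vines_disjoint hT h₁ h₃ h13
  have d23 := vines_disjoint hT h₂ h₃ h23
  have d21 := vines_disjoint hT h₂ h₁ h12.symm
  have d31 := vines_disjoint hT h₃ h₁ h13.symm
  have d32 := vines_disjoint hT h₃ h₂ h23.symm
  have hb12 : b₁ ≠ b₂ := fun h => d12 b₁ p₁.end_mem_support (by rw [h]; exact p₂.end_mem_support)
  have hb13 : b₁ ≠ b₃ := fun h => d13 b₁ p₁.end_mem_support (by rw [h]; exact p₃.end_mem_support)
  have hb23 : b₂ ≠ b₃ := fun h => d23 b₂ p₂.end_mem_support (by rw [h]; exact p₃.end_mem_support)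
  by_cases hub1 : u = b₁
  · exact key_s11 T hT p₂ p₃ p₁ h₂ h₃ h₁ d23 d21 d31 hvu
      (by rw [hub1]; exact hb12) (by rw [hub1]; exact hb13)
  · by_cases hub2 : u = b₂
    · exact key_s11 T hT p₁ p₃ p₂ h₁ h₃ h₂ d13 d12 d32 hvu hub1
        (by rw [hub2]; exact hb23)
    · exact key_s11 T hT p₁ p₂ p₃ h₁ h₂ h₃ d12 d13 d23 hvu hub1 hub2


end PaperPC
end
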